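/- Let π be a PDLsf[Loop] path formula. For all MSCs M over P and Σ and events e such that ⟦π⟧_M(e) is nonempty: ⟦π⟧_M(e) = { f ∈ E : min_π(e) ≤proc f ≤proc max_π(e) and there exists g ∈ E with (g,f) ∈ ⟦π⟧_M }. -/

import Mathlib

set_option maxHeartbeats 1000000

/-! ## Message sequence charts -/

/-- A message sequence chart (MSC) over processes `P` and labels `Lab`.
Events are natural numbers; `E` is the finite nonempty set of events. -/
structure MSC (P : Type) (Lab : Type) where
  /-- the finite set of events -/
  E : Finset ℕ
  nonemptyE : E.Nonempty
  /-- process edges `→` (direct successor on a process) -/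
  proc : ℕ → ℕ → Prop
  /-- message edges `◁` -/
  msg : ℕ → ℕ → Prop
  /-- location (process) of each event -/
  loc : ℕ → P
  /-- label of each event -/
  lab : ℕ → Lab
  proc_mem : ∀ e f, proc e f → e ∈ E ∧ f ∈ E
  msg_mem : ∀ e f, msg e f → e ∈ E ∧ f ∈ E
  proc_loc : ∀ e f, proc e f → loc e = loc f
  msg_loc : ∀ e f, msg e f → loc e ≠ loc f
  /-- on each process, any two events are comparable w.r.t. `→⁺` -/
  proc_total : ∀ e f, e ∈ E → f ∈ E → loc e = loc f →
    e = f ∨ Relation.TransGen proc e f ∨ Relation.TransGen proc f e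
  /-- `→` is the direct-successor (covering) relation of the order `→⁺` -/
  proc_cover : ∀ e f, proc e f →
    ¬ ∃ g, Relation.TransGen proc e g ∧ Relation.TransGen proc g f
  /-- every event belongs to at most one message edge -/
  msg_once : ∀ e f e' f', msg e f → msg e' f' →
    (e = e' ∨ e = f' ∨ f = e' ∨ f = f') → e = e' ∧ f = f'
  /-- FIFO condition -/
  fifo : ∀ e f e' f', msg e f → msg e' f' → loc e = loc e' → loc f = loc f' →
    (Relation.ReflTransGen proc e e' ↔ Relation.ReflTransGen proc f f')
  /-- `→ ∪ ◁` is acyclic -/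
  acyclic : ∀ e, ¬ Relation.TransGen (fun a b => proc a b ∨ msg a b) e e

namespace MSC

variable {P Lab : Type}

/-- `≤proc`, the reflexive transitive closure of `→`. -/
def procLe (M : MSC P Lab) : ℕ → ℕ → Prop := Relation.ReflTransGen M.proc

/-- `<proc`, the transitive closure of `→`. -/
def procLt (M : MSC P Lab) : ℕ → ℕ → Prop := Relation.TransGen M.proc

/-- the happened-before relation `≤ = (→ ∪ ◁)*`. -/
def hb (M : MSC P Lab) : ℕ → ℕ → Prop :=
  Relation.ReflTransGen (fun a b => M.proc a b ∨ M.msg a b)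

/-- Relabelling an MSC (same events and edges, new labelling). -/
def relabel {Γ : Type} (M : MSC P Lab) (γ : ℕ → Γ) : MSC P Γ where
  E := M.E
  nonemptyE := M.nonemptyE
  proc := M.proc
  msg := M.msg
  loc := M.loc
  lab := γ
  proc_mem := M.proc_mem
  msg_mem := M.msg_mem
  proc_loc := M.proc_loc
  msg_loc := M.msg_loc
  proc_total := M.proc_total
  proc_cover := M.proc_cover
  msg_once := M.msg_once
  fifo := M.fifo
  acyclic := M.acyclic

end MSC

/-! ## Star-free PDL -/

mutual
/-- Event formulas of star-free PDL. -/
inductive EF (P Lab : Type) : Type where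
  | proc : P → EF P Lab
  | lab : Lab → EF P Lab
  | or : EF P Lab → EF P Lab → EF P Lab
  | not : EF P Lab → EF P Lab
  | dia : PF P Lab → EF P Lab → EF P Lab
  | loop : PF P Lab → EF P Lab
/-- Path formulas of star-free PDL. -/
inductive PF (P Lab : Type) : Type where
  | next : PF P Lab
  | prev : PF P Lab
  | msg : P → P → PF P Lab
  | msgInv : P → P → PF P Lab
  | nextG : EF P Lab → PF P Lab
  | prevG : EF P Lab → PF P Lab
  | jump : P → P → PF P Lab
  | test : EF P Lab → PF P Lab
  | comp : PF P Lab → PF P Lab → PF P Lab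
  | union : PF P Lab → PF P Lab → PF P Lab
  | inter : PF P Lab → PF P Lab → PF P Lab
  | compl : PF P Lab → PF P Lab
end

mutual
/-- Satisfaction of event formulas at an event. -/
def EF.sat {P Lab : Type} (M : MSC P Lab) : EF P Lab → ℕ → Prop
  | .proc p, e => e ∈ M.E ∧ M.loc e = p
  | .lab a, e => e ∈ M.E ∧ M.lab e = a
  | .or φ ψ, e => EF.sat M φ e ∨ EF.sat M ψ e
  | .not φ, e => e ∈ M.E ∧ ¬ EF.sat M φ e
  | .dia π φ, e => ∃ f, PF.sem M π e f ∧ EF.sat M φ f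
  | .loop π, e => PF.sem M π e e
/-- Semantics of path formulas as binary relations on events. -/
def PF.sem {P Lab : Type} (M : MSC P Lab) : PF P Lab → ℕ → ℕ → Prop
  | .next, e, f => M.proc e f
  | .prev, e, f => M.proc f e
  | .msg p q, e, f => M.msg e f ∧ M.loc e = p ∧ M.loc f = q
  | .msgInv p q, e, f => M.msg f e ∧ M.loc f = p ∧ M.loc e = q
  | .nextG φ, e, f => M.procLt e f ∧ ∀ g, M.procLt e g → M.procLt g f → EF.sat M φ g
  | .prevG φ, e, f => M.procLt f e ∧ ∀ g, M.procLt f g → M.procLt g e → EF.sat M φ g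
  | .jump p r, e, f => e ∈ M.E ∧ f ∈ M.E ∧ M.loc e = p ∧ M.loc f = r
  | .test φ, e, f => e = f ∧ EF.sat M φ e
  | .comp π₁ π₂, e, f => ∃ g, PF.sem M π₁ e g ∧ PF.sem M π₂ g f
  | .union π₁ π₂, e, f => PF.sem M π₁ e f ∨ PF.sem M π₂ e f
  | .inter π₁ π₂, e, f => PF.sem M π₁ e f ∧ PF.sem M π₂ e f
  | .compl π, e, f => e ∈ M.E ∧ f ∈ M.E ∧ ¬ PF.sem M π e f
end

/-- Sentences of star-free PDL. -/
inductive PDLS (P Lab : Type) : Type where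
  | ex : EF P Lab → PDLS P Lab
  | or : PDLS P Lab → PDLS P Lab → PDLS P Lab
  | not : PDLS P Lab → PDLS P Lab

/-- Satisfaction of PDL sentences. -/
def PDLS.sat {P Lab : Type} (M : MSC P Lab) : PDLS P Lab → Prop
  | .ex φ => ∃ e ∈ M.E, EF.sat M φ e
  | .or ξ ζ => PDLS.sat M ξ ∨ PDLS.sat M ζ
  | .not ξ => ¬ PDLS.sat M ξ

/-- The four optional operators of star-free PDL. -/
inductive PDLOp : Type where
  | loop | union | inter | compl
deriving DecidableEq

mutual
/-- `EF.inFrag R φ` : the event formula `φ` belongs to the fragment `PDLsf[R]`. -/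
def EF.inFrag {P Lab : Type} (R : Set PDLOp) : EF P Lab → Prop
  | .proc _ => True
  | .lab _ => True
  | .or φ ψ => EF.inFrag R φ ∧ EF.inFrag R ψ
  | .not φ => EF.inFrag R φ
  | .dia π φ => PF.inFrag R π ∧ EF.inFrag R φ
  | .loop π => PDLOp.loop ∈ R ∧ PF.inFrag R π
/-- `PF.inFrag R π` : the path formula `π` belongs to the fragment `PDLsf[R]`. -/
def PF.inFrag {P Lab : Type} (R : Set PDLOp) : PF P Lab → Prop
  | .next => True
  | .prev => True
  | .msg _ _ => True
  | .msgInv _ _ => True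
  | .nextG φ => EF.inFrag R φ
  | .prevG φ => EF.inFrag R φ
  | .jump _ _ => True
  | .test φ => EF.inFrag R φ
  | .comp π₁ π₂ => PF.inFrag R π₁ ∧ PF.inFrag R π₂
  | .union π₁ π₂ => PDLOp.union ∈ R ∧ PF.inFrag R π₁ ∧ PF.inFrag R π₂
  | .inter π₁ π₂ => PDLOp.inter ∈ R ∧ PF.inFrag R π₁ ∧ PF.inFrag R π₂
  | .compl π => PDLOp.compl ∈ R ∧ PF.inFrag R π
end

/-- `PDLS.inFrag R ξ` : the sentence `ξ` belongs to the fragment `PDLsf[R]`. -/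
def PDLS.inFrag {P Lab : Type} (R : Set PDLOp) : PDLS P Lab → Prop
  | .ex φ => EF.inFrag R φ
  | .or ξ ζ => PDLS.inFrag R ξ ∧ PDLS.inFrag R ζ
  | .not ξ => PDLS.inFrag R ξ

/-- Conjunction of event formulas (derived operator). -/
def EF.and {P Lab : Type} (φ ψ : EF P Lab) : EF P Lab :=
  .not (.or (.not φ) (.not ψ))

/-- `isMinOf M π e m` : `m` is the `≤proc`-least element of `⟦π⟧_M(e)`
(in particular `⟦π⟧_M(e)` is nonempty). -/
def isMinOf {P Lab : Type} (M : MSC P Lab) (π : PF P Lab) (e m : ℕ) : Prop :=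
  PF.sem M π e m ∧ ∀ f, PF.sem M π e f → M.procLe m f

/-- `isMaxOf M π e m` : `m` is the `≤proc`-greatest element of `⟦π⟧_M(e)`
(in particular `⟦π⟧_M(e)` is nonempty). -/
def isMaxOf {P Lab : Type} (M : MSC P Lab) (π : PF P Lab) (e m : ℕ) : Prop :=
  PF.sem M π e m ∧ ∀ f, PF.sem M π e f → M.procLe f m

/-! ## MSO/FO logic over MSCs -/

/-- Formulas of MSO over MSCs: first-order kernel with atoms `p(x)`, `a(x)`,
`x = y`, `x → y`, `x ◁ y`, `x ≤ y` and additionally `x ∈ X_k` (monadic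
second-order variables, used for the EMSO prefix). -/
inductive FOS (P Lab : Type) : Type where
  | pred : P → ℕ → FOS P Lab
  | lab : Lab → ℕ → FOS P Lab
  | eq : ℕ → ℕ → FOS P Lab
  | edge : ℕ → ℕ → FOS P Lab
  | medge : ℕ → ℕ → FOS P Lab
  | le : ℕ → ℕ → FOS P Lab
  | inSet : ℕ → ℕ → FOS P Lab
  | or : FOS P Lab → FOS P Lab → FOS P Lab
  | not : FOS P Lab → FOS P Lab
  | ex : ℕ → FOS P Lab → FOS P Lab

/-- Satisfaction, with a first-order valuation `ν` and a second-order valuation `σ`.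
First-order quantification ranges over the events of the MSC. -/
def FOS.sat {P Lab : Type} (M : MSC P Lab) : FOS P Lab → (ℕ → ℕ) → (ℕ → Set ℕ) → Prop
  | .pred p x, ν, _ => M.loc (ν x) = p
  | .lab a x, ν, _ => M.lab (ν x) = a
  | .eq x y, ν, _ => ν x = ν y
  | .edge x y, ν, _ => M.proc (ν x) (ν y)
  | .medge x y, ν, _ => M.msg (ν x) (ν y)
  | .le x y, ν, _ => M.hb (ν x) (ν y)
  | .inSet x k, ν, σ => ν x ∈ σ k
  | .or Φ Ψ, ν, σ => FOS.sat M Φ ν σ ∨ FOS.sat M Ψ ν σ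
  | .not Φ, ν, σ => ¬ FOS.sat M Φ ν σ
  | .ex x Φ, ν, σ => ∃ e ∈ M.E, FOS.sat M Φ (Function.update ν x e) σ

/-- Free first-order variables. -/
def FOS.free {P Lab : Type} : FOS P Lab → Finset ℕ
  | .pred _ x => {x}
  | .lab _ x => {x}
  | .eq x y => {x, y}
  | .edge x y => {x, y}
  | .medge x y => {x, y}
  | .le x y => {x, y}
  | .inSet x _ => {x}
  | .or Φ Ψ => FOS.free Φ ∪ FOS.free Ψ
  | .not Φ => FOS.free Φ
  | .ex x Φ => (FOS.free Φ).erase x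

/-- All first-order variables occurring (free or bound). -/
def FOS.vars {P Lab : Type} : FOS P Lab → Finset ℕ
  | .pred _ x => {x}
  | .lab _ x => {x}
  | .eq x y => {x, y}
  | .edge x y => {x, y}
  | .medge x y => {x, y}
  | .le x y => {x, y}
  | .inSet x _ => {x}
  | .or Φ Ψ => FOS.vars Φ ∪ FOS.vars Ψ
  | .not Φ => FOS.vars Φ
  | .ex x Φ => insert x (FOS.vars Φ)

/-- A formula is first-order (`FO[→,◁,≤]`) iff it contains no set atoms. -/
def FOS.noSets {P Lab : Type} : FOS P Lab → Prop
  | .pred _ _ => True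
  | .lab _ _ => True
  | .eq _ _ => True
  | .edge _ _ => True
  | .medge _ _ => True
  | .le _ _ => True
  | .inSet _ _ => False
  | .or Φ Ψ => FOS.noSets Φ ∧ FOS.noSets Ψ
  | .not Φ => FOS.noSets Φ
  | .ex _ Φ => FOS.noSets Φ

/-! ## Communicating finite-state machines -/

/-- Actions of a process: internal `⟨a⟩`, send `!(a,m,q)`, receive `?(a,m,q)`. -/
inductive CAct (P Lab Msg : Type) : Type where
  | int : Lab → CAct P Lab Msg
  | snd : Lab → Msg → P → CAct P Lab Msg
  | rcv : Lab → Msg → P → CAct P Lab Msg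

/-- The label performed by an action. -/
def CAct.label {P Lab Msg : Type} : CAct P Lab Msg → Lab
  | .int a => a
  | .snd a _ _ => a
  | .rcv a _ _ => a

/-- A communicating finite-state machine over `P` and `Lab`. -/
structure CFM (P Lab : Type) where
  /-- states -/
  S : Type
  finS : Fintype S
  /-- messages -/
  Msg : Type
  finMsg : Fintype Msg
  /-- initial state of each process -/
  ι : P → S
  /-- transition relation of each process -/
  Δ : P → S → CAct P Lab Msg → S → Prop
  Δ_snd : ∀ p s a m q s', Δ p s (.snd a m q) s' → q ≠ p
  Δ_rcv : ∀ p s a m q s', Δ p s (.rcv a m q) s' → q ≠ p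
  /-- acceptance condition -/
  Acc : (P → S) → Prop

/-- Existence of an accepting run of a CFM on an MSC. -/
def CFM.Accepts {P Lab : Type} (A : CFM P Lab) (M : MSC P Lab) : Prop :=
  ∃ (src tgt : ℕ → A.S) (act : ℕ → CAct P Lab A.Msg),
    (∀ e ∈ M.E, A.Δ (M.loc e) (src e) (act e) (tgt e)) ∧
    (∀ e ∈ M.E, (act e).label = M.lab e) ∧
    (∀ e ∈ M.E, (¬ ∃ f, M.proc f e) → src e = A.ι (M.loc e)) ∧
    (∀ e f, M.proc e f → tgt e = src f) ∧
    (∀ e ∈ M.E, (¬ ∃ f, M.msg e f) → (¬ ∃ f, M.msg f e) → ∃ a, act e = .int a) ∧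
    (∀ e f, M.msg e f →
      ∃ a a' m, act e = .snd a m (M.loc f) ∧ act f = .rcv a' m (M.loc e)) ∧
    (∃ fin : P → A.S,
      (∀ p, (∀ e ∈ M.E, M.loc e ≠ p) → fin p = A.ι p) ∧
      (∀ e ∈ M.E, (¬ ∃ f, M.proc e f) → fin (M.loc e) = tgt e) ∧
      A.Acc fin)

/-- The language of a CFM. -/
def CFM.lang {P Lab : Type} (A : CFM P Lab) : Set (MSC P Lab) := {M | A.Accepts M}

/-! ## Letter-to-letter MSC transducers -/

/-- The relation accepted by a letter-to-letter MSC transducer from `Lab` to `Γ`,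
i.e., a CFM over `P` and `Lab × Γ`. -/
def Ltrans {P Lab Γ : Type} (A : CFM P (Lab × Γ)) (M : MSC P Lab) (N : MSC P Γ) : Prop :=
  ∃ γ : ℕ → Γ, N = M.relabel γ ∧ A.Accepts (M.relabel fun e => (M.lab e, γ e))

/-- `M_φ` : the MSC over `Bool` obtained from `M` by labelling each event with
the truth value of the event formula `φ`. -/
noncomputable def MSC.evalEF {P Lab : Type} (M : MSC P Lab) (φ : EF P Lab) : MSC P Bool :=
  M.relabel fun e => @ite Bool (EF.sat M φ e) (Classical.propDecidable _) true false

/-! ## Boolean combinations -/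

/-- Boolean combinations over atoms of type `α`. -/
inductive BC (α : Type) : Type where
  | atom : α → BC α
  | or : BC α → BC α → BC α
  | not : BC α → BC α

/-- Evaluation of a boolean combination given truth values of the atoms. -/
def BC.eval {α : Type} (v : α → Prop) : BC α → Prop
  | .atom a => v a
  | .or b c => BC.eval v b ∨ BC.eval v c
  | .not b => ¬ BC.eval v b

/-- The atoms occurring in a boolean combination. -/
def BC.atoms {α : Type} : BC α → Set α
  | .atom a => {a}
  | .or b c => BC.atoms b ∪ BC.atoms c
  | .not b => BC.atoms b

/-! ## Bounded MSCs -/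

/-- `r` is a linearization of `M`: a total order on the events containing
the happened-before relation. -/
def IsLinearization {P Lab : Type} (M : MSC P Lab) (r : ℕ → ℕ → Prop) : Prop :=
  (∀ e ∈ M.E, r e e) ∧
  (∀ e ∈ M.E, ∀ f ∈ M.E, r e f → r f e → e = f) ∧
  (∀ e ∈ M.E, ∀ f ∈ M.E, ∀ g ∈ M.E, r e f → r f g → r e g) ∧
  (∀ e ∈ M.E, ∀ f ∈ M.E, r e f ∨ r f e) ∧
  (∀ e ∈ M.E, ∀ f ∈ M.E, M.hb e f → r e f)

/-- `r` is a `B`-bounded linearization of `M`: at any point, each channel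
contains at most `B` pending messages. -/
def IsBBoundedLin {P Lab : Type} (M : MSC P Lab) (r : ℕ → ℕ → Prop) (B : ℕ) : Prop :=
  IsLinearization M r ∧
  ∀ g ∈ M.E, ∀ p q : P, p ≠ q →
    Set.ncard {ef : ℕ × ℕ | M.msg ef.1 ef.2 ∧ M.loc ef.1 = p ∧ M.loc ef.2 = q ∧
      r ef.1 g ∧ ¬ r ef.2 g} ≤ B

/-- `M` is `∃B`-bounded: some linearization of `M` is `B`-bounded. -/
def ExistsBBounded {P Lab : Type} (M : MSC P Lab) (B : ℕ) : Prop :=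
  ∃ r : ℕ → ℕ → Prop, IsBBoundedLin M r B

/-- `g` is a send event on channel `(p,q)`. -/
def isSendOn {P Lab : Type} (M : MSC P Lab) (p q : P) (g : ℕ) : Prop :=
  M.loc g = p ∧ ∃ h, M.msg g h ∧ M.loc h = q

/-- `revB M B f g` : `f` is a receive event with matching send `e` on some
channel `(p,q)`, and `g` is the `B`-th send on channel `(p,q)` strictly after `e`. -/
def revB {P Lab : Type} (M : MSC P Lab) (B : ℕ) (f g : ℕ) : Prop :=
  ∃ e, M.msg e f ∧ isSendOn M (M.loc e) (M.loc f) g ∧ M.procLt e g ∧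
    Set.ncard {g' | isSendOn M (M.loc e) (M.loc f) g' ∧ M.procLt e g' ∧ M.procLe g' g} = B

/-- `≤_B = (≤ ∪ rev_B)*`. -/
def leB {P Lab : Type} (M : MSC P Lab) (B : ℕ) : ℕ → ℕ → Prop :=
  Relation.ReflTransGen (fun a b => (M.proc a b ∨ M.msg a b) ∨ revB M B a b)

/-- `<_B`, the strict part of `≤_B`. -/
def ltB {P Lab : Type} (M : MSC P Lab) (B : ℕ) (e f : ℕ) : Prop :=
  leB M B e f ∧ ¬ leB M B f e

/-- `e ∥_B f` : incomparable w.r.t. `≤_B`. -/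
def parB {P Lab : Type} (M : MSC P Lab) (B : ℕ) (e f : ℕ) : Prop :=
  ¬ leB M B e f ∧ ¬ leB M B f e

/-- `↑_B e = {g : e ≤_B g}`. -/
def upB {P Lab : Type} (M : MSC P Lab) (B : ℕ) (e : ℕ) : Set ℕ :=
  {g | leB M B e g}

/-- The order `≺_B` (w.r.t. a fixed total order on `P`): `e ≺_B f` iff `e <_B f`, or
`e ∥_B f` and the `⊑`-minimum of `loc(↑_B e \ ↑_B f)` is strictly below the
`⊑`-minimum of `loc(↑_B f \ ↑_B e)`. -/
def precB {P Lab : Type} [LinearOrder P] (M : MSC P Lab) (B : ℕ) (e f : ℕ) : Prop :=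
  ltB M B e f ∨
    (parB M B e f ∧ ∃ p ∈ M.loc '' (upB M B e \ upB M B f),
      ∀ q ∈ M.loc '' (upB M B f \ upB M B e), p < q)

/-! ## Auxiliary lemmas for Statement 8 -/

namespace PDLAux

variable {P Lab : Type} {M : MSC P Lab}

theorem procLt_mem {a b : ℕ} (h : M.procLt a b) : a ∈ M.E ∧ b ∈ M.E := by
  induction h with
  | single h => exact M.proc_mem _ _ h
  | tail _ h ih => exact ⟨ih.1, (M.proc_mem _ _ h).2⟩

theorem procLe_loc {a b : ℕ} (h : M.procLe a b) : M.loc a = M.loc b := by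
  induction h with
  | refl => rfl
  | tail _ h ih => exact ih.trans (M.proc_loc _ _ h)

theorem procLt_loc {a b : ℕ} (h : M.procLt a b) : M.loc a = M.loc b :=
  procLe_loc h.to_reflTransGen

theorem procLt_of_le_ne {a b : ℕ} (h : M.procLe a b) (hne : a ≠ b) : M.procLt a b := by
  rcases Relation.reflTransGen_iff_eq_or_transGen.mp h with rfl | h
  · exact absurd rfl hne
  · exact h

theorem not_procLt_self (a : ℕ) : ¬ M.procLt a a := fun h =>
  M.acyclic a (Relation.TransGen.mono (fun _ _ h => Or.inl h) a a h)

theorem procLe_antisymm {a b : ℕ} (h1 : M.procLe a b) (h2 : M.procLe b a) : a = b := by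
  by_contra hne
  exact not_procLt_self a ((procLt_of_le_ne h1 hne).trans_left h2)

theorem procLe_total {a b : ℕ} (ha : a ∈ M.E) (hb : b ∈ M.E) (hl : M.loc a = M.loc b) :
    M.procLe a b ∨ M.procLe b a := by
  rcases M.proc_total a b ha hb hl with rfl | h | h
  · exact Or.inl Relation.ReflTransGen.refl
  · exact Or.inl h.to_reflTransGen
  · exact Or.inr h.to_reflTransGen

theorem succ_unique {a b c : ℕ} (h1 : M.proc a b) (h2 : M.proc a c) : b = c := by
  by_contra hne
  have hb := (M.proc_mem _ _ h1).2
  have hc := (M.proc_mem _ _ h2).2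
  have hl : M.loc b = M.loc c := (M.proc_loc _ _ h1).symm.trans (M.proc_loc _ _ h2)
  rcases M.proc_total b c hb hc hl with rfl | h | h
  · exact hne rfl
  · exact M.proc_cover a c h2 ⟨b, Relation.TransGen.single h1, h⟩
  · exact M.proc_cover a b h1 ⟨c, Relation.TransGen.single h2, h⟩

theorem pred_unique {a b c : ℕ} (h1 : M.proc a c) (h2 : M.proc b c) : a = b := by
  by_contra hne
  have ha := (M.proc_mem _ _ h1).1
  have hb := (M.proc_mem _ _ h2).1
  have hl : M.loc a = M.loc b := (M.proc_loc _ _ h1).trans (M.proc_loc _ _ h2).symm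
  rcases M.proc_total a b ha hb hl with rfl | h | h
  · exact hne rfl
  · exact M.proc_cover a c h1 ⟨b, h, Relation.TransGen.single h2⟩
  · exact M.proc_cover b c h2 ⟨a, h, Relation.TransGen.single h1⟩

end PDLAux

open PDLAux

mutual

theorem satMem {P Lab : Type} (M : MSC P Lab) :
    ∀ (φ : EF P Lab) (e : ℕ), EF.sat M φ e → e ∈ M.E
  | .proc _, _, h => h.1
  | .lab _, _, h => h.1
  | .or φ ψ, e, h => h.elim (satMem M φ e) (satMem M ψ e)
  | .not _, _, h => h.1
  | .dia π φ, e, h => by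
      obtain ⟨f, h1, _⟩ := h
      exact (semMem M π e f h1).1
  | .loop π, e, h => (semMem M π e e h).1

theorem semMem {P Lab : Type} (M : MSC P Lab) :
    ∀ (π : PF P Lab) (e f : ℕ), PF.sem M π e f → e ∈ M.E ∧ f ∈ M.E
  | .next, e, f, h => M.proc_mem e f h
  | .prev, e, f, h => ⟨(M.proc_mem f e h).2, (M.proc_mem f e h).1⟩
  | .msg _ _, e, f, h => M.msg_mem e f h.1
  | .msgInv _ _, e, f, h => ⟨(M.msg_mem f e h.1).2, (M.msg_mem f e h.1).1⟩
  | .nextG _, _, _, h => procLt_mem h.1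
  | .prevG _, e, f, h => ⟨(procLt_mem h.1).2, (procLt_mem h.1).1⟩
  | .jump _ _, _, _, h => ⟨h.1, h.2.1⟩
  | .test φ, e, f, h => by
      obtain ⟨rfl, hs⟩ := h
      exact ⟨satMem M φ e hs, satMem M φ e hs⟩
  | .comp π₁ π₂, e, f, h => by
      obtain ⟨g, h1, h2⟩ := h
      exact ⟨(semMem M π₁ e g h1).1, (semMem M π₂ g f h2).2⟩
  | .union π₁ π₂, e, f, h =>
      h.elim (semMem M π₁ e f) (semMem M π₂ e f)
  | .inter π₁ _, e, f, h => semMem M π₁ e f h.1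
  | .compl _, _, _, h => ⟨h.1, h.2.1⟩

end

theorem notInFrag_union {P Lab : Type} {π₁ π₂ : PF P Lab} :
    ¬ PF.inFrag {PDLOp.loop} (.union π₁ π₂) := by
  intro h
  rw [PF.inFrag] at h
  exact absurd (Set.mem_singleton_iff.mp h.1) (by decide)

theorem notInFrag_inter {P Lab : Type} {π₁ π₂ : PF P Lab} :
    ¬ PF.inFrag {PDLOp.loop} (.inter π₁ π₂) := by
  intro h
  rw [PF.inFrag] at h
  exact absurd (Set.mem_singleton_iff.mp h.1) (by decide)

theorem notInFrag_compl {P Lab : Type} {π : PF P Lab} :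
    ¬ PF.inFrag {PDLOp.loop} (.compl π) := by
  intro h
  rw [PF.inFrag] at h
  exact absurd (Set.mem_singleton_iff.mp h.1) (by decide)

/-- Target locations are determined by source locations. -/
theorem locTgt {P Lab : Type} {M : MSC P Lab} :
    ∀ (π : PF P Lab), PF.inFrag {PDLOp.loop} π →
    ∀ (e f e' f' : ℕ), PF.sem M π e f → PF.sem M π e' f' →
      M.loc e = M.loc e' → M.loc f = M.loc f'
  | .next, _, e, f, e', f', h, h', hl =>
      (M.proc_loc e f h).symm.trans (hl.trans (M.proc_loc e' f' h'))
  | .prev, _, e, f, e', f', h, h', hl =>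
      ((M.proc_loc f e h).trans hl).trans (M.proc_loc f' e' h').symm
  | .msg _ _, _, _, _, _, _, h, h', _ => h.2.2.trans h'.2.2.symm
  | .msgInv _ _, _, _, _, _, _, h, h', _ => h.2.1.trans h'.2.1.symm
  | .nextG _, _, e, f, e', f', h, h', hl =>
      (procLt_loc h.1).symm.trans (hl.trans (procLt_loc h'.1))
  | .prevG _, _, e, f, e', f', h, h', hl =>
      ((procLt_loc h.1).trans hl).trans (procLt_loc h'.1).symm
  | .jump _ _, _, _, _, _, _, h, h', _ => h.2.2.2.trans h'.2.2.2.symm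
  | .test _, _, e, f, e', f', h, h', hl => by
      obtain ⟨rfl, -⟩ := h; obtain ⟨rfl, -⟩ := h'; exact hl
  | .comp π₁ π₂, hπ, e, f, e', f', h, h', hl => by
      rw [PF.inFrag] at hπ
      obtain ⟨g, h1, h2⟩ := h
      obtain ⟨g', h1', h2'⟩ := h'
      exact locTgt π₂ hπ.2 g f g' f' h2 h2' (locTgt π₁ hπ.1 e g e' g' h1 h1' hl)
  | .union _ _, hπ, _, _, _, _, _, _, _ => absurd hπ notInFrag_union
  | .inter _ _, hπ, _, _, _, _, _, _, _ => absurd hπ notInFrag_inter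
  | .compl _, hπ, _, _, _, _, _, _, _ => absurd hπ notInFrag_compl

/-- Source locations are determined by target locations. -/
theorem locSrc {P Lab : Type} {M : MSC P Lab} :
    ∀ (π : PF P Lab), PF.inFrag {PDLOp.loop} π →
    ∀ (e f e' f' : ℕ), PF.sem M π e f → PF.sem M π e' f' →
      M.loc f = M.loc f' → M.loc e = M.loc e'
  | .next, _, e, f, e', f', h, h', hl =>
      ((M.proc_loc e f h).trans hl).trans (M.proc_loc e' f' h').symm
  | .prev, _, e, f, e', f', h, h', hl =>
      (M.proc_loc f e h).symm.trans (hl.trans (M.proc_loc f' e' h'))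
  | .msg _ _, _, _, _, _, _, h, h', _ => h.2.1.trans h'.2.1.symm
  | .msgInv _ _, _, _, _, _, _, h, h', _ => h.2.2.trans h'.2.2.symm
  | .nextG _, _, e, f, e', f', h, h', hl =>
      ((procLt_loc h.1).trans hl).trans (procLt_loc h'.1).symm
  | .prevG _, _, e, f, e', f', h, h', hl =>
      (procLt_loc h.1).symm.trans (hl.trans (procLt_loc h'.1))
  | .jump _ _, _, _, _, _, _, h, h', _ => h.2.2.1.trans h'.2.2.1.symm
  | .test _, _, e, f, e', f', h, h', hl => by
      obtain ⟨rfl, -⟩ := h; obtain ⟨rfl, -⟩ := h'; exact hl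
  | .comp π₁ π₂, hπ, e, f, e', f', h, h', hl => by
      rw [PF.inFrag] at hπ
      obtain ⟨g, h1, h2⟩ := h
      obtain ⟨g', h1', h2'⟩ := h'
      exact locSrc π₁ hπ.1 e g e' g' h1 h1' (locSrc π₂ hπ.2 g f g' f' h2 h2' hl)
  | .union _ _, hπ, _, _, _, _, _, _, _ => absurd hπ notInFrag_union
  | .inter _ _, hπ, _, _, _, _, _, _, _ => absurd hπ notInFrag_inter
  | .compl _, hπ, _, _, _, _, _, _, _ => absurd hπ notInFrag_compl

/-- The crossing lemma: relations defined by `PDLsf[Loop]` path formulas are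
closed under "uncrossing". -/
theorem crossing {P Lab : Type} {M : MSC P Lab} :
    ∀ (π : PF P Lab), PF.inFrag {PDLOp.loop} π →
    ∀ (e f e' f' : ℕ), PF.sem M π e f → PF.sem M π e' f' →
      M.procLe e e' → M.procLe f' f → PF.sem M π e f' ∧ PF.sem M π e' f
  | .next, _, e, f, e', f', h, h', hee', hff' => by
      have hee : e = e' := by
        by_contra hne
        have hlt : M.procLt e e' := procLt_of_le_ne hee' hne
        obtain ⟨x, hx, hxe'⟩ := Relation.TransGen.head'_iff.mp hlt
        have hfx : f = x := succ_unique h hx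
        subst hfx
        exact not_procLt_self f'
          (Relation.TransGen.trans_right (hff'.trans hxe') (Relation.TransGen.single h'))
      subst hee
      have : f = f' := succ_unique h h'
      subst this
      exact ⟨h, h⟩
  | .prev, _, e, f, e', f', h, h', hee', hff' => by
      have hff : f' = f := by
        by_contra hne
        have hlt : M.procLt f' f := procLt_of_le_ne hff' hne
        exact M.proc_cover f' e' h'
          ⟨f, hlt, Relation.TransGen.trans_left (Relation.TransGen.single h) hee'⟩
      subst hff
      have : e = e' := succ_unique h h'
      subst this
      exact ⟨h, h⟩
  | .msg p q, _, e, f, e', f', h, h', hee', hff' => by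
      obtain ⟨hm, hp, hq⟩ := h
      obtain ⟨hm', hp', hq'⟩ := h'
      have hffle : M.procLe f f' :=
        (M.fifo e f e' f' hm hm' (hp.trans hp'.symm) (hq.trans hq'.symm)).mp hee'
      have hfeq : f = f' := procLe_antisymm hffle hff'
      obtain ⟨rfl, rfl⟩ := M.msg_once e f e' f' hm hm' (Or.inr (Or.inr (Or.inr hfeq)))
      exact ⟨⟨hm, hp, hq⟩, ⟨hm, hp, hq⟩⟩
  | .msgInv p q, _, e, f, e', f', h, h', hee', hff' => by
      obtain ⟨hm, hp, hq⟩ := h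
      obtain ⟨hm', hp', hq'⟩ := h'
      have heele : M.procLe e' e :=
        (M.fifo f' e' f e hm' hm (hp'.trans hp.symm) (hq'.trans hq.symm)).mp hff'
      have heq : e = e' := procLe_antisymm hee' heele
      obtain ⟨rfl, rfl⟩ := M.msg_once f e f' e' hm hm' (Or.inr (Or.inr (Or.inr heq)))
      exact ⟨⟨hm, hp, hq⟩, ⟨hm, hp, hq⟩⟩
  | .nextG φ, _, e, f, e', f', h, h', hee', hff' => by
      obtain ⟨hlt, hg⟩ := h
      obtain ⟨hlt', hg'⟩ := h'
      constructor
      · exact ⟨Relation.TransGen.trans_right hee' hlt',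
          fun g h1 h2 => hg g h1 (h2.trans_left hff')⟩
      · exact ⟨hlt'.trans_left hff',
          fun g h1 h2 => hg g (Relation.TransGen.trans_right hee' h1) h2⟩
  | .prevG φ, _, e, f, e', f', h, h', hee', hff' => by
      obtain ⟨hlt, hg⟩ := h
      obtain ⟨hlt', hg'⟩ := h'
      constructor
      · exact ⟨Relation.TransGen.trans_right hff' hlt,
          fun g h1 h2 => hg' g h1 (h2.trans_left hee')⟩
      · exact ⟨hlt.trans_left hee',
          fun g h1 h2 => hg' g (Relation.TransGen.trans_right hff' h1) h2⟩
  | .jump p r, _, e, f, e', f', h, h', _, _ =>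
      ⟨⟨h.1, h'.2.1, h.2.2.1, h'.2.2.2⟩, ⟨h'.1, h.2.1, h'.2.2.1, h.2.2.2⟩⟩
  | .test φ, _, e, f, e', f', h, h', hee', hff' => by
      obtain ⟨rfl, hs⟩ := h
      obtain ⟨rfl, hs'⟩ := h'
      have : e = e' := procLe_antisymm hee' hff'
      subst this
      exact ⟨⟨rfl, hs⟩, ⟨rfl, hs⟩⟩
  | .comp π₁ π₂, hπ, e, f, e', f', h, h', hee', hff' => by
      rw [PF.inFrag] at hπ
      obtain ⟨g, h1, h2⟩ := h
      obtain ⟨g', h1', h2'⟩ := h'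
      have hloc : M.loc g = M.loc g' := locTgt π₁ hπ.1 e g e' g' h1 h1' (procLe_loc hee')
      have hgE := (semMem M π₁ e g h1).2
      have hg'E := (semMem M π₁ e' g' h1').2
      rcases procLe_total hgE hg'E hloc with hgg | hgg
      · obtain ⟨c1, c2⟩ := crossing π₂ hπ.2 g f g' f' h2 h2' hgg hff'
        exact ⟨⟨g, h1, c1⟩, ⟨g', h1', c2⟩⟩
      · obtain ⟨c1, c2⟩ := crossing π₁ hπ.1 e g e' g' h1 h1' hee' hgg
        exact ⟨⟨g', c1, h2'⟩, ⟨g, c2, h2⟩⟩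
  | .union _ _, hπ, _, _, _, _, _, _, _, _ => absurd hπ notInFrag_union
  | .inter _ _, hπ, _, _, _, _, _, _, _, _ => absurd hπ notInFrag_inter
  | .compl _, hπ, _, _, _, _, _, _, _, _ => absurd hπ notInFrag_compl

/-- A finite nonempty set that is totally preordered by `r` has a least element. -/
theorem exists_min_rel {r : ℕ → ℕ → Prop} (htrans : ∀ a b c, r a b → r b c → r a c)
    (s : Finset ℕ) (hs : s.Nonempty) (hrefl : ∀ x ∈ s, r x x)
    (htot : ∀ x ∈ s, ∀ y ∈ s, r x y ∨ r y x) :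
    ∃ m ∈ s, ∀ x ∈ s, r m x := by
  induction s using Finset.cons_induction with
  | empty => exact absurd hs (by simp)
  | cons a s ha ih =>
    rcases s.eq_empty_or_nonempty with rfl | hs'
    · refine ⟨a, Finset.mem_cons_self a _, ?_⟩
      intro x hx
      have : x = a := by simpa using hx
      subst this
      exact hrefl x (Finset.mem_cons_self x _)
    · obtain ⟨m, hm, hmin⟩ := ih hs'
        (fun x hx => hrefl x (Finset.mem_cons_of_mem hx))
        (fun x hx y hy => htot x (Finset.mem_cons_of_mem hx) y (Finset.mem_cons_of_mem hy))
      rcases htot a (Finset.mem_cons_self a s) m (Finset.mem_cons_of_mem hm) with h | h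
      · refine ⟨a, Finset.mem_cons_self a s, ?_⟩
        intro x hx
        rcases Finset.mem_cons.mp hx with rfl | hx
        · exact hrefl x (Finset.mem_cons_self x s)
        · exact htrans a m x h (hmin x hx)
      · refine ⟨m, Finset.mem_cons_of_mem hm, ?_⟩
        intro x hx
        rcases Finset.mem_cons.mp hx with rfl | hx
        · exact h
        · exact hmin x hx


/-- For a `PDLsf[Loop]` path formula `π` and an event `e` with
`⟦π⟧(e) ≠ ∅`, the set `⟦π⟧(e)` consists exactly of the events `f` between
`min_π(e)` and `max_π(e)` (w.r.t. `≤proc`) satisfying `⟨π⁻¹⟩true`. -/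
theorem pdlsf_loop_image {P Lab : Type}
    [Fintype P] [Nonempty P] [Fintype Lab] [Nonempty Lab]
    (π : PF P Lab) (hπ : PF.inFrag {PDLOp.loop} π)
    (M : MSC P Lab) (e : ℕ) (hne : ∃ f, PF.sem M π e f) :
    (∃ mn, isMinOf M π e mn) ∧ (∃ mx, isMaxOf M π e mx) ∧
    ∀ mn mx, isMinOf M π e mn → isMaxOf M π e mx →
      ∀ f, (PF.sem M π e f ↔
        (f ∈ M.E ∧ M.procLe mn f ∧ M.procLe f mx ∧ ∃ g, PF.sem M π g f)) := by
    classical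
  obtain ⟨f₀, hf₀⟩ := hne
  have heE : e ∈ M.E := (semMem M π e f₀ hf₀).1
  set S := M.E.filter (fun f => PF.sem M π e f) with hS
  have hmemS : ∀ f, f ∈ S ↔ f ∈ M.E ∧ PF.sem M π e f := fun f => by simp [hS]
  have hSsem : ∀ f, PF.sem M π e f → f ∈ S := fun f hf =>
    (hmemS f).mpr ⟨(semMem M π e f hf).2, hf⟩
  have hSne : S.Nonempty := ⟨f₀, hSsem f₀ hf₀⟩
  have htot : ∀ x ∈ S, ∀ y ∈ S, M.procLe x y ∨ M.procLe y x := by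
    intro x hx y hy
    obtain ⟨hxE, hxs⟩ := (hmemS x).mp hx
    obtain ⟨hyE, hys⟩ := (hmemS y).mp hy
    exact PDLAux.procLe_total hxE hyE (locTgt π hπ e x e y hxs hys rfl)
  obtain ⟨mn, hmnS, hmn⟩ := exists_min_rel (fun a b c h1 h2 => h1.trans h2) S hSne
    (fun x _ => Relation.ReflTransGen.refl) htot
  obtain ⟨mx, hmxS, hmx⟩ := exists_min_rel (r := fun a b => M.procLe b a)
    (fun a b c h1 h2 => h2.trans h1) S hSne (fun x _ => Relation.ReflTransGen.refl)
    (fun x hx y hy => (htot x hx y hy).symm)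
  refine ⟨⟨mn, ((hmemS mn).mp hmnS).2, fun f hf => hmn f (hSsem f hf)⟩,
    ⟨mx, ((hmemS mx).mp hmxS).2, fun f hf => hmx f (hSsem f hf)⟩, ?_⟩
  intro mn' mx' hmin' hmax' f
  constructor
  · intro hf
    exact ⟨(semMem M π e f hf).2, hmin'.2 f hf, hmax'.2 f hf, e, hf⟩
  · rintro ⟨hfE, hmnf, hfmx, g₀, hg₀⟩
    have hlocf : M.loc mn' = M.loc f := PDLAux.procLe_loc hmnf
    have hloceg : M.loc e = M.loc g₀ := locSrc π hπ e mn' g₀ f hmin'.1 hg₀ hlocf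
    have hg₀E := (semMem M π g₀ f hg₀).1
    rcases PDLAux.procLe_total heE hg₀E hloceg with h | h
    · exact (crossing π hπ e mx' g₀ f hmax'.1 hg₀ h hfmx).1
    · exact (crossing π hπ g₀ f e mn' hg₀ hmin'.1 h hmnf).2
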